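/- For a lossless variable-length binary code without prefix constraints, the expected codeword length satisfies E[ℓ(C(A))] ≥ θ⁻¹(H(A)), where θ(x) = x + (1+x)·log₂(1+x) − x·log₂(x). -/

import Mathlib

open scoped Classical
open Finset

noncomputable def prob {Ω : Type} [Fintype Ω] (p : Ω → ℝ) (E : Ω → Prop) : ℝ :=
  ∑ ω, if E ω then p ω else 0

noncomputable def plog (q : ℝ) : ℝ := if q = 0 then 0 else -q * Real.logb 2 q

/-- Shannon entropy (in bits) of a random variable `X` on a finite space with pmf `p`. -/
noncomputable def entropy {Ω α : Type} [Fintype Ω] (p : Ω → ℝ) (X : Ω → α) : ℝ :=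
  ∑ x ∈ Finset.univ.image X, plog (prob p (fun ω => X ω = x))

/-- Conditional entropy `H(A|Z) = H(A,Z) - H(Z)` (in bits). -/
noncomputable def condEntropy {Ω α β : Type} [Fintype Ω] (p : Ω → ℝ) (A : Ω → α) (Z : Ω → β) : ℝ :=
  entropy p (fun ω => (A ω, Z ω)) - entropy p Z

/-- Mutual information `I(X;Y)` (in bits). -/
noncomputable def mutualInfo {Ω α β : Type} [Fintype Ω] (p : Ω → ℝ) (X : Ω → α) (Y : Ω → β) : ℝ :=
  entropy p X + entropy p Y - entropy p (fun ω => (X ω, Y ω))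

/-- Conditional mutual information `I(X;Y|Z) = H(X|Z) - H(X|Y,Z)` (in bits). -/
noncomputable def condMutualInfo {Ω α β γ : Type} [Fintype Ω] (p : Ω → ℝ)
    (X : Ω → α) (Y : Ω → β) (Z : Ω → γ) : ℝ :=
  condEntropy p X Z - condEntropy p X (fun ω => (Y ω, Z ω))

/-- Expected codeword length `E[ℓ(A)]`. -/
noncomputable def expLen {Ω : Type} [Fintype Ω] (p : Ω → ℝ) (A : Ω → List Bool) : ℝ :=
  ∑ ω, p ω * (A ω).length

/-- θ(x) = x + (1+x)·log₂(1+x) − x·log₂(x); note `Real.logb 2 0 = 0`, so θ(0) = 0. -/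
noncomputable def theta (x : ℝ) : ℝ :=
  x + (1 + x) * Real.logb 2 (1 + x) - x * Real.logb 2 x

/-- The inverse of θ on `[0,∞)`. -/
noncomputable def thetaInv : ℝ → ℝ := Function.invFunOn theta (Set.Ici 0)

/-- Per-term Gibbs inequality. -/
lemma plog_le_aux (f g : ℝ) (hf : 0 ≤ f) (hg : 0 ≤ g) (h : f ≠ 0 → 0 < g) :
    plog f ≤ f * Real.logb 2 g⁻¹ + (g - f) / Real.log 2 := by
  rcases eq_or_lt_of_le hf with h0 | h0
  · simp only [plog, ← h0, if_pos rfl, zero_mul, sub_zero, zero_add]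
    positivity
  · have hgpos : 0 < g := h h0.ne'
    have hlog2 : (0:ℝ) < Real.log 2 := Real.log_pos (by norm_num)
    have key : f * Real.log (g / f) ≤ g - f := by
      calc f * Real.log (g / f) ≤ f * (g / f - 1) :=
            mul_le_mul_of_nonneg_left (Real.log_le_sub_one_of_pos (by positivity)) hf
        _ = g - f := by field_simp
    rw [plog, if_neg h0.ne']
    rw [Real.logb, Real.logb, Real.log_inv, Real.log_div (ne_of_gt hgpos) (ne_of_gt h0)] at *
    simp only [div_eq_mul_inv]
    have hinv : (0:ℝ) ≤ (Real.log 2)⁻¹ := inv_nonneg.mpr hlog2.le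
    nlinarith [mul_le_mul_of_nonneg_right key hinv]

/-- Counting: number of length-k boolean lists in a finset is ≤ 2^k. -/
lemma card_len_le (T : Finset (List Bool)) (k : ℕ) :
    (T.filter (fun l => l.length = k)).card ≤ 2 ^ k := by
  classical
  have h := Finset.card_le_card_of_injOn (s := T.filter (fun l => l.length = k))
    (t := (Finset.univ : Finset (Fin k → Bool))) (fun l i => l.getD i false)
    (fun a _ => Finset.mem_univ _) ?_
  · simpa using h
  · intro a ha b hb hab
    simp only [Finset.coe_filter, Set.mem_setOf_eq] at ha hb
    apply List.ext_getElem (ha.2.trans hb.2.symm)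
    intro i h1 h2
    have := congrFun hab ⟨i, ha.2 ▸ h1⟩
    simpa [List.getD, List.getElem?_eq_getElem, h1, h2] using this

/-- Kraft-type bound for an arbitrary finite set of binary strings. -/
lemma kraft_bound (T : Finset (List Bool)) (s : ℝ) (hs0 : 0 ≤ s) (hs1 : s < 1) :
    ∑ l ∈ T, (s / 2) ^ l.length ≤ 1 / (1 - s) := by
  classical
  set N := (T.sup fun l => l.length) + 1 with hN
  have hmaps : ∀ l ∈ T, l.length ∈ Finset.range N := by
    intro l hl
    exact Finset.mem_range.mpr (Nat.lt_succ_of_le (Finset.le_sup hl))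
  rw [← Finset.sum_fiberwise_of_maps_to hmaps (fun l => (s/2) ^ l.length)]
  have hstep : ∀ k ∈ Finset.range N,
      ∑ l ∈ T.filter (fun l => l.length = k), (s/2) ^ l.length ≤ s ^ k := by
    intro k _
    have : ∑ l ∈ T.filter (fun l => l.length = k), (s/2) ^ l.length
        = (T.filter (fun l => l.length = k)).card * (s/2) ^ k := by
      rw [Finset.sum_congr rfl (fun l hl => by
        rw [(Finset.mem_filter.mp hl).2]), Finset.sum_const, nsmul_eq_mul]
    rw [this]
    calc ((T.filter (fun l => l.length = k)).card : ℝ) * (s/2) ^ k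
        ≤ (2:ℝ) ^ k * (s/2) ^ k := by
          apply mul_le_mul_of_nonneg_right _ (by positivity)
          exact_mod_cast (Nat.cast_le.mpr (card_len_le T k)).trans_eq (by push_cast; ring)
      _ = s ^ k := by rw [← mul_pow]; ring_nf
  calc ∑ k ∈ Finset.range N, ∑ l ∈ T.filter (fun l => l.length = k), (s/2) ^ l.length
      ≤ ∑ k ∈ Finset.range N, s ^ k := Finset.sum_le_sum hstep
    _ = (s ^ N - 1) / (s - 1) := geom_sum_eq (ne_of_lt hs1) N
    _ = (1 - s ^ N) / (1 - s) := by
        rw [div_eq_div_iff (by nlinarith) (by nlinarith)]; ring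
    _ ≤ 1 / (1 - s) := by
        gcongr
        · nlinarith [pow_nonneg hs0 N]

/-- Weighted sums over the image agree with sums over the base space. -/
lemma sum_image_prob {Ω α : Type} [Fintype Ω] (p : Ω → ℝ) (A : Ω → α) (F : α → ℝ) :
    ∑ x ∈ Finset.univ.image A, prob p (fun ω => A ω = x) * F x = ∑ ω, p ω * F (A ω) := by
  classical
  unfold prob
  have hpt : ∀ x, (∑ ω, if A ω = x then p ω else 0) * F x
      = ∑ ω, if A ω = x then p ω * F (A ω) else 0 := by
    intro x
    rw [Finset.sum_mul]
    refine Finset.sum_congr rfl fun ω _ => ?_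
    split_ifs with h
    · rw [h]
    · rw [zero_mul]
  simp_rw [hpt]
  rw [Finset.sum_comm]
  refine Finset.sum_congr rfl fun ω _ => ?_
  rw [Finset.sum_ite_eq, if_pos (Finset.mem_image_of_mem A (Finset.mem_univ ω))]

lemma theta_explicit :
    theta = fun x => x + ((1+x) * Real.log (1+x) - x * Real.log x) / Real.log 2 := by
  funext x; simp only [theta, Real.logb]; ring

lemma continuous_theta : Continuous theta := by
  rw [theta_explicit]
  exact continuous_id.add (((Real.continuous_mul_log.comp
    (continuous_const.add continuous_id)).sub Real.continuous_mul_log).div_const _)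

lemma theta_zero : theta 0 = 0 := by simp [theta]

lemma le_theta {x : ℝ} (hx : 0 ≤ x) : x ≤ theta x := by
  unfold theta
  rcases le_or_gt 1 x with h | h
  · have h1 : Real.logb 2 x ≤ Real.logb 2 (1+x) :=
      Real.logb_le_logb_of_le (by norm_num) (by linarith) (by linarith)
    have h2 : 0 ≤ Real.logb 2 x := Real.logb_nonneg (by norm_num) h
    nlinarith
  · have h1 : Real.logb 2 x ≤ 0 := Real.logb_nonpos (by norm_num) hx h.le
    have h2 : 0 ≤ Real.logb 2 (1+x) := Real.logb_nonneg (by norm_num) (by linarith)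
    nlinarith

lemma theta_strictMono : StrictMonoOn theta (Set.Ici 0) := by
  apply strictMonoOn_of_deriv_pos (convex_Ici 0) continuous_theta.continuousOn
  intro x hx
  rw [interior_Ici] at hx
  have hx0 : 0 < x := hx
  have hlog2 : (0:ℝ) < Real.log 2 := Real.log_pos (by norm_num)
  have hd : HasDerivAt theta (1 + (Real.log (1+x) - Real.log x) / Real.log 2) x := by
    rw [theta_explicit]
    have h1 : HasDerivAt (fun y : ℝ => (1+y) * Real.log (1+y)) (Real.log (1+x) + 1) x := by
      have := (Real.hasDerivAt_mul_log (x := 1+x) (by positivity)).comp x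
        ((hasDerivAt_id x).const_add 1)
      simpa [Function.comp_def] using this
    have h2 : HasDerivAt (fun y : ℝ => y * Real.log y) (Real.log x + 1) x :=
      Real.hasDerivAt_mul_log hx0.ne'
    have h3 := (hasDerivAt_id x).add ((h1.sub h2).div_const (Real.log 2))
    exact h3.congr_deriv (by ring)
  rw [hd.deriv]
  have hlt : Real.log x < Real.log (1+x) := Real.log_lt_log hx0 (by linarith)
  have : 0 < (Real.log (1+x) - Real.log x) / Real.log 2 := div_pos (by linarith) hlog2
  linarith

lemma entropy_le_theta {Ω α : Type} [Fintype Ω]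
    (p : Ω → ℝ) (hp : ∀ ω, 0 ≤ p ω) (hsum : ∑ ω, p ω = 1)
    (A : Ω → α) (C : α → List Bool) (hC : Function.Injective C) :
    entropy p A ≤ theta (expLen p (fun ω => C (A ω))) := by
  classical
  set L := expLen p (fun ω => C (A ω)) with hLdef
  set px : α → ℝ := fun x => prob p (fun ω => A ω = x) with hpxdef
  set S := Finset.univ.image A with hSdef
  have hpx0 : ∀ x, 0 ≤ px x := by
    intro x
    apply Finset.sum_nonneg
    intro ω _
    split_ifs
    · exact hp ω
    · exact le_refl 0
  have hsum1 : ∑ x ∈ S, px x = 1 := by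
    have := sum_image_prob p A (fun _ => 1)
    simpa [hsum] using this
  have hLsum : ∑ x ∈ S, px x * ((C x).length : ℝ) = L := by
    rw [hLdef]
    exact sum_image_prob p A (fun x => ((C x).length : ℝ))
  have hL0 : 0 ≤ L := by
    rw [hLdef]
    exact Finset.sum_nonneg fun ω _ => mul_nonneg (hp ω) (Nat.cast_nonneg _)
  have hent : entropy p A = ∑ x ∈ S, plog (px x) := rfl
  -- generic Gibbs bound
  have gibbs : ∀ g : α → ℝ, (∀ x ∈ S, 0 ≤ g x) → (∀ x ∈ S, px x ≠ 0 → 0 < g x) →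
      (∑ x ∈ S, g x ≤ 1) → entropy p A ≤ ∑ x ∈ S, px x * Real.logb 2 (g x)⁻¹ := by
    intro g hg0 hgpos hgsum
    have h1 : entropy p A ≤
        ∑ x ∈ S, (px x * Real.logb 2 (g x)⁻¹ + (g x - px x) / Real.log 2) := by
      rw [hent]
      exact Finset.sum_le_sum fun x hx =>
        plog_le_aux (px x) (g x) (hpx0 x) (hg0 x hx) (hgpos x hx)
    rw [Finset.sum_add_distrib] at h1
    have h2 : ∑ x ∈ S, (g x - px x) / Real.log 2 ≤ 0 := by
      rw [← Finset.sum_div, Finset.sum_sub_distrib, hsum1]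
      apply div_nonpos_of_nonpos_of_nonneg
      · linarith
      · exact (Real.log_pos (by norm_num)).le
    linarith
  rcases eq_or_lt_of_le hL0 with h0 | hLpos
  · -- L = 0 case
    have hlen0 : ∀ x ∈ S, px x ≠ 0 → C x = [] := by
      intro x hx hpx
      have hnn : ∀ y ∈ S, 0 ≤ px y * ((C y).length : ℝ) :=
        fun y _ => mul_nonneg (hpx0 y) (Nat.cast_nonneg _)
      have hterm : px x * ((C x).length : ℝ) = 0 :=
        (Finset.sum_eq_zero_iff_of_nonneg hnn).mp (by rw [hLsum, ← h0]) x hx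
      rcases mul_eq_zero.mp hterm with h | h
      · exact absurd h hpx
      · exact List.length_eq_zero_iff.mp (by exact_mod_cast h)
    have hcard : ∑ x ∈ S, (if C x = [] then (1:ℝ) else 0) ≤ 1 := by
      rw [Finset.sum_boole]
      have : (S.filter fun x => C x = []).card ≤ 1 := by
        apply Finset.card_le_one.mpr
        intro a ha b hb
        simp only [Finset.mem_filter] at ha hb
        exact hC (ha.2.trans hb.2.symm)
      exact_mod_cast this
    have hbound := gibbs (fun x => if C x = [] then (1:ℝ) else 0)
      (fun x _ => by split_ifs <;> norm_num)
      (fun x hx hpx => by rw [if_pos (hlen0 x hx hpx)]; norm_num)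
      hcard
    have hzero : ∑ x ∈ S, px x * Real.logb 2 (if C x = [] then (1:ℝ) else 0)⁻¹ = 0 := by
      apply Finset.sum_eq_zero
      intro x hx
      by_cases hpx : px x = 0
      · rw [hpx, zero_mul]
      · rw [if_pos (hlen0 x hx hpx)]
        norm_num
    rw [hzero] at hbound
    rw [← h0, theta_zero]
    exact hbound
  · -- L > 0 case
    set s : ℝ := L / (1 + L) with hsdef
    have h1L : (0:ℝ) < 1 + L := by linarith
    have hs0 : 0 < s := div_pos hLpos h1L
    have hs1 : s < 1 := by
      rw [hsdef, div_lt_one h1L]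
      linarith
    have h1ms : 1 - s = 1 / (1 + L) := by
      rw [hsdef]
      field_simp
      ring
    set g : α → ℝ := fun x => (1 / (1 + L)) * (s / 2) ^ (C x).length with hgdef
    have hgsum : ∑ x ∈ S, g x ≤ 1 := by
      have hinj : ∑ x ∈ S, (s / 2) ^ (C x).length
          = ∑ l ∈ S.image C, (s / 2) ^ l.length := by
        rw [Finset.sum_image (fun a _ b _ hab => hC hab)]
      have hk := kraft_bound (S.image C) s hs0.le hs1
      rw [h1ms] at hk
      calc ∑ x ∈ S, g x = (1 / (1 + L)) * ∑ x ∈ S, (s / 2) ^ (C x).length := by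
            rw [Finset.mul_sum]
        _ = (1 / (1 + L)) * ∑ l ∈ S.image C, (s / 2) ^ l.length := by rw [hinj]
        _ ≤ (1 / (1 + L)) * (1 + L) := by
            apply mul_le_mul_of_nonneg_left _ (by positivity)
            calc ∑ l ∈ S.image C, (s / 2) ^ l.length ≤ 1 / (1 / (1 + L)) := hk
              _ = 1 + L := by field_simp
        _ = 1 := by field_simp
    have hbound := gibbs g (fun x _ => by positivity) (fun x _ _ => by positivity) hgsum
    have hlogterm : ∀ x, Real.logb 2 (g x)⁻¹
        = Real.logb 2 (1 + L) + ((C x).length : ℝ) * (1 - Real.logb 2 s) := by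
      intro x
      have hginv : (g x)⁻¹ = (1 + L) * ((s / 2)⁻¹) ^ (C x).length := by
        rw [hgdef]
        simp only [mul_inv, inv_pow, one_div, inv_inv]
      rw [hginv, Real.logb_mul h1L.ne' (by positivity), Real.logb_pow,
        Real.logb_inv, Real.logb_div hs0.ne' (by norm_num),
        Real.logb_self_eq_one (by norm_num : (1:ℝ) < 2)]
      ring
    have hfinal : ∑ x ∈ S, px x * Real.logb 2 (g x)⁻¹ = theta L := by
      calc ∑ x ∈ S, px x * Real.logb 2 (g x)⁻¹
          = ∑ x ∈ S, (px x * Real.logb 2 (1 + L)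
              + (px x * ((C x).length : ℝ)) * (1 - Real.logb 2 s)) := by
            refine Finset.sum_congr rfl fun x _ => ?_
            rw [hlogterm x]; ring
        _ = (∑ x ∈ S, px x) * Real.logb 2 (1 + L)
              + (∑ x ∈ S, px x * ((C x).length : ℝ)) * (1 - Real.logb 2 s) := by
            rw [Finset.sum_add_distrib, Finset.sum_mul, Finset.sum_mul]
        _ = Real.logb 2 (1 + L) + L * (1 - Real.logb 2 s) := by
            rw [hsum1, hLsum, one_mul]
        _ = theta L := by
            rw [hsdef, Real.logb_div hLpos.ne' h1L.ne', theta]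
            ring
    rw [hfinal] at hbound
    exact hbound

/-- History `(X_0, …, X_{t-1})` of a discrete-time process. -/
def hist {Ω α : Type} (X : ℕ → Ω → α) (t : ℕ) (ω : Ω) : Fin t → α := fun i => X i ω

theorem lossless_nonprefix_bound {Ω α : Type} [Fintype Ω]
    (p : Ω → ℝ) (hp : ∀ ω, 0 ≤ p ω) (hsum : ∑ ω, p ω = 1)
    (A : Ω → α) (C : α → List Bool) (hC : Function.Injective C) :
    expLen p (fun ω => C (A ω)) ≥ thetaInv (entropy p A) := by
  classical
  have hH0 : 0 ≤ entropy p A := by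
    apply Finset.sum_nonneg
    intro x _
    unfold plog
    split_ifs with h
    · exact le_refl 0
    · have h1 : 0 ≤ prob p (fun ω => A ω = x) := by
        apply Finset.sum_nonneg
        intro ω _
        split_ifs
        · exact hp ω
        · exact le_refl 0
      have h2 : prob p (fun ω => A ω = x) ≤ 1 := by
        rw [← hsum]
        apply Finset.sum_le_sum
        intro ω _
        split_ifs
        · exact le_refl _
        · exact hp ω
      have h3 : Real.logb 2 (prob p (fun ω => A ω = x)) ≤ 0 :=
        Real.logb_nonpos (by norm_num) h1 h2
      nlinarith
  have hL0 : 0 ≤ expLen p (fun ω => C (A ω)) :=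
    Finset.sum_nonneg fun ω _ => mul_nonneg (hp ω) (Nat.cast_nonneg _)
  have hkey := entropy_le_theta p hp hsum A C hC
  set H := entropy p A with hHdef
  set L := expLen p (fun ω => C (A ω)) with hLdef
  obtain ⟨x, hx, hθx⟩ : ∃ x ∈ Set.Icc (0:ℝ) H, theta x = H := by
    have hiv := intermediate_value_Icc hH0 continuous_theta.continuousOn
    have hmem : H ∈ Set.Icc (theta 0) (theta H) := by
      rw [theta_zero]
      exact ⟨hH0, le_theta hH0⟩
    obtain ⟨x, hx, hθ⟩ := hiv hmem
    exact ⟨x, hx, hθ⟩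
  have hex : ∃ a ∈ Set.Ici (0:ℝ), theta a = H := ⟨x, hx.1, hθx⟩
  have h1 : theta (thetaInv H) = H := Function.invFunOn_eq hex
  have h2 : thetaInv H ∈ Set.Ici (0:ℝ) := Function.invFunOn_mem hex
  rw [ge_iff_le]
  exact (theta_strictMono.le_iff_le h2 (Set.mem_Ici.mpr hL0)).mp (by rw [h1]; exact hkey)
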